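/- Every unit interval simplicial complex of dimension $d \geq 1$ is a poor closed simplicial complex (with the same labelling): for every two distinct facets $F: i_1 \dots i_{d+1}$ and $G: j_1 \dots j_{d+1}$ (vertices listed increasingly) such that $i_k = j_k$ for some $k$, there exists a facet contained in $F \cup G$ other than $F$ and $G$. -/
import Mathlib


/-- Unit interval condition (w.r.t. the natural labelling) for the facet family `F` of a
pure `d`-complex on `[n]`: whenever `s : i₁ < … < i_{d+1}` is a facet and
`i₁ ≤ j₁ < … < j_{d+1} ≤ i_{d+1}`, the set `{j₁, …, j_{d+1}}` is a facet. -/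
def UnitIntervalCond {n : ℕ} (d : ℕ) (F : Finset (Finset (Fin n))) : Prop :=
  ∀ s ∈ F, ∀ t : Finset (Fin n), t.card = d + 1 →
    (∃ a ∈ s, ∃ b ∈ s, ∀ j ∈ t, a ≤ j ∧ j ≤ b) → t ∈ F

/-- Poor closed condition (w.r.t. the natural labelling): for any two distinct facets
`s, t` whose increasing vertex lists agree in some position (i.e. there is a common
vertex `x` preceded by equally many vertices in `s` and in `t`), there is a facet
contained in `s ∪ t` different from both. -/
def PoorClosedCond {n : ℕ} (F : Finset (Finset (Fin n))) : Prop :=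
  ∀ s ∈ F, ∀ t ∈ F, s ≠ t →
    (∃ x : Fin n, x ∈ s ∧ x ∈ t ∧
      (s.filter (· < x)).card = (t.filter (· < x)).card) →
    ∃ u ∈ F, u ⊆ s ∪ t ∧ u ≠ s ∧ u ≠ t

/-- split cardinality around a member -/
lemma card_split {n : ℕ} (s : Finset (Fin n)) (x : Fin n) (hx : x ∈ s) :
    (s.filter (· < x)).card + 1 + (s.filter (x < ·)).card = s.card := by
  have h := Finset.card_filter_add_card_filter_not (s := s) (p := (· < x))
  have : s.filter (fun j => ¬ j < x) = insert x (s.filter (x < ·)) := by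
    ext j
    simp only [Finset.mem_filter, Finset.mem_insert, not_lt]
    constructor
    · rintro ⟨hj, hxj⟩
      rcases eq_or_lt_of_le hxj with h' | h'
      · exact Or.inl h'.symm
      · exact Or.inr ⟨hj, h'⟩
    · rintro (rfl | ⟨hj, hxj⟩)
      · exact ⟨hx, le_refl _⟩
      · exact ⟨hj, le_of_lt hxj⟩
  rw [this, Finset.card_insert_of_notMem (by simp [lt_irrefl])] at h
  omega

/-- generic case: t inside the span of s -/
lemma generic {n d : ℕ} (hd : 1 ≤ d) (F : Finset (Finset (Fin n)))
    (hpure : ∀ s ∈ F, s.card = d + 1) (hunit : UnitIntervalCond d F)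
    (s : Finset (Fin n)) (hs : s ∈ F) (t : Finset (Fin n)) (ht : t ∈ F) (hst : s ≠ t)
    (hsne : s.Nonempty) (htne : t.Nonempty)
    (hmin : s.min' hsne ≤ t.min' htne) (hmax : t.max' htne ≤ s.max' hsne) :
    ∃ u ∈ F, u ⊆ s ∪ t ∧ u ≠ s ∧ u ≠ t := by
  have hcs := hpure s hs
  have hct := hpure t ht
  obtain ⟨y, hyt, hys⟩ : ∃ y, y ∈ t ∧ y ∉ s := by
    by_contra h
    push_neg at h
    exact hst ((Finset.eq_of_subset_of_card_le h (by omega)).symm)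
  obtain ⟨z, hzs, hzt⟩ : ∃ z, z ∈ s ∧ z ∉ t := by
    by_contra h
    push_neg at h
    exact hst (Finset.eq_of_subset_of_card_le h (by omega))
  have hyz : y ≠ z := fun h => hys (h ▸ hzs)
  have hsub : ({y, z} : Finset (Fin n)) ⊆ s ∪ t := by
    intro j hj
    simp only [Finset.mem_insert, Finset.mem_singleton] at hj
    rcases hj with rfl | rfl
    · exact Finset.mem_union_right _ hyt
    · exact Finset.mem_union_left _ hzs
  have hcyz : ({y, z} : Finset (Fin n)).card = 2 := Finset.card_pair hyz
  have hcard : d + 1 ≤ (s ∪ t).card := by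
    have : insert y s ⊆ s ∪ t := by
      intro j hj
      rcases Finset.mem_insert.mp hj with rfl | hj
      · exact Finset.mem_union_right _ hyt
      · exact Finset.mem_union_left _ hj
    have := Finset.card_le_card this
    rw [Finset.card_insert_of_notMem hys] at this
    omega
  obtain ⟨u, hyzu, hust, hucard⟩ :=
    Finset.exists_subsuperset_card_eq hsub (by omega) hcard
  refine ⟨u, ?_, hust, ?_, ?_⟩
  · refine hunit s hs u hucard ⟨s.min' hsne, s.min'_mem _, s.max' hsne, s.max'_mem _, ?_⟩
    intro j hj
    rcases Finset.mem_union.mp (hust hj) with hj' | hj'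
    · exact ⟨s.min'_le _ hj', s.le_max' _ hj'⟩
    · exact ⟨le_trans hmin (t.min'_le _ hj'), le_trans (t.le_max' _ hj') hmax⟩
  · intro h
    exact hys (h ▸ hyzu (by simp))
  · intro h
    exact hzt (h ▸ hyzu (by simp))

/-- skew case: min t < min s and max t < max s -/
lemma skew {n d : ℕ} (F : Finset (Finset (Fin n)))
    (hpure : ∀ s ∈ F, s.card = d + 1) (hunit : UnitIntervalCond d F)
    (s : Finset (Fin n)) (hs : s ∈ F) (t : Finset (Fin n)) (ht : t ∈ F)
    (x : Fin n) (hxs : x ∈ s) (hxt : x ∈ t)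
    (hk : (s.filter (· < x)).card = (t.filter (· < x)).card)
    (hsne : s.Nonempty) (htne : t.Nonempty)
    (hmin : t.min' htne < s.min' hsne) (hmax : t.max' htne < s.max' hsne) :
    ∃ u ∈ F, u ⊆ s ∪ t ∧ u ≠ s ∧ u ≠ t := by
  have hcs := hpure s hs
  have hct := hpure t ht
  have hsplits := card_split s x hxs
  have hsplitt := card_split t x hxt
  set u : Finset (Fin n) := (s.filter (· < x)) ∪ ({x} ∪ t.filter (x < ·)) with hu
  have hux : ∀ j ∈ u, j ∈ s ∧ j < x ∨ j = x ∨ j ∈ t ∧ x < j := by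
    intro j hj
    simp only [hu, Finset.mem_union, Finset.mem_singleton, Finset.mem_filter] at hj
    tauto
  have hucard : u.card = d + 1 := by
    have hd1 : Disjoint ({x} : Finset (Fin n)) (t.filter (x < ·)) := by
      simp [Finset.disjoint_singleton_left]
    have hd2 : Disjoint (s.filter (· < x)) ({x} ∪ t.filter (x < ·)) := by
      rw [Finset.disjoint_union_right]
      constructor
      · simp only [Finset.disjoint_singleton_right, Finset.mem_filter, not_and, not_lt]
        intro _; exact le_refl _
      · rw [Finset.disjoint_left]
        intro j hj hj'
        simp only [Finset.mem_filter] at hj hj'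
        exact absurd (hj.2.trans hj'.2) (lt_irrefl j)
    rw [hu, Finset.card_union_of_disjoint hd2, Finset.card_union_of_disjoint hd1]
    simp only [Finset.card_singleton]
    omega
  refine ⟨u, ?_, ?_, ?_, ?_⟩
  · refine hunit s hs u hucard ⟨s.min' hsne, s.min'_mem _, s.max' hsne, s.max'_mem _, ?_⟩
    intro j hj
    rcases hux j hj with ⟨hj', _⟩ | rfl | ⟨hj', hxj⟩
    · exact ⟨s.min'_le _ hj', s.le_max' _ hj'⟩
    · exact ⟨s.min'_le _ hxs, s.le_max' _ hxs⟩
    · exact ⟨le_trans (s.min'_le _ hxs) (le_of_lt hxj),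
        le_trans (t.le_max' _ hj') (le_of_lt hmax)⟩
  · intro j hj
    rcases hux j hj with ⟨hj', _⟩ | rfl | ⟨hj', _⟩
    · exact Finset.mem_union_left _ hj'
    · exact Finset.mem_union_left _ hxs
    · exact Finset.mem_union_right _ hj'
  · -- u ≠ s : max' s ∉ u
    intro h
    have hms : s.max' hsne ∈ u := by rw [h]; exact s.max'_mem hsne
    have hxm : x ≤ t.max' htne := t.le_max' _ hxt
    rcases hux _ hms with ⟨_, hlt⟩ | heq | ⟨hmt, _⟩
    · exact absurd (lt_of_lt_of_le hlt (s.le_max' _ hxs)) (lt_irrefl _)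
    · exact absurd (heq ▸ hmax) (not_lt.mpr hxm)
    · exact absurd (lt_of_le_of_lt (t.le_max' _ hmt) hmax) (lt_irrefl _)
  · -- u ≠ t : min' t ∉ u
    intro h
    have hmt : t.min' htne ∈ u := by rw [h]; exact t.min'_mem htne
    have hxm : t.min' htne ≤ x := t.min'_le _ hxt
    rcases hux _ hmt with ⟨hjs, _⟩ | heq | ⟨_, hgt⟩
    · exact absurd (lt_of_lt_of_le hmin (s.min'_le _ hjs)) (lt_irrefl _)
    · exact absurd (heq ▸ hmin) (not_lt.mpr (s.min'_le _ hxs))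
    · exact absurd (lt_of_lt_of_le hgt hxm) (lt_irrefl _)

/-- every unit interval complex of dimension `d ≥ 1` is poor closed with
the same labelling. -/
theorem stmt_7 (d n : ℕ) (hd : 1 ≤ d) (F : Finset (Finset (Fin n)))
    (hpure : ∀ s ∈ F, s.card = d + 1)
    (hunit : UnitIntervalCond d F) :
    PoorClosedCond F := by
  unfold PoorClosedCond
  intro s hs t ht hst ⟨x, hxs, hxt, hk⟩
  have hsne : s.Nonempty := ⟨x, hxs⟩
  have htne : t.Nonempty := ⟨x, hxt⟩
  rcases le_or_gt (s.min' hsne) (t.min' htne) with h1 | h1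
  · rcases le_or_gt (t.max' htne) (s.max' hsne) with h2 | h2
    · exact generic hd F hpure hunit s hs t ht hst hsne htne h1 h2
    · rcases eq_or_lt_of_le h1 with h1' | h1'
      · obtain ⟨u, hu, hust, hus, hut⟩ :=
          generic hd F hpure hunit t ht s hs hst.symm htne hsne (le_of_eq h1'.symm)
            (le_of_lt h2)
        exact ⟨u, hu, by rwa [Finset.union_comm] at hust, hut, hus⟩
      · obtain ⟨u, hu, hust, hus, hut⟩ :=
          skew F hpure hunit t ht s hs x hxt hxs hk.symm htne hsne h1' h2
        exact ⟨u, hu, by rwa [Finset.union_comm] at hust, hut, hus⟩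
  · rcases le_or_gt (s.max' hsne) (t.max' htne) with h2 | h2
    · obtain ⟨u, hu, hust, hus, hut⟩ :=
        generic hd F hpure hunit t ht s hs hst.symm htne hsne (le_of_lt h1) h2
      exact ⟨u, hu, by rwa [Finset.union_comm] at hust, hut, hus⟩
    · exact skew F hpure hunit s hs t ht x hxs hxt hk hsne htne h1 h2
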